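/- arXiv:1604.03042 — 3 statements merged into one kernel-verified Lean document; each statement's English description precedes it below -/
import Mathlib

section
/- There exists an 𝔽-stopping time τ, finite-valued almost surely, whose law (the pushforward of ℙ under τ) equals μ = Σ_{k=1}^r p_k δ_{t_k}. -/
open MeasureTheory ProbabilityTheory Set

noncomputable section

/-- The atomic measure `∑_{k=1}^r p_k δ_{t_k}` on `ℝ`. -/
def atomicLaw (r : ℕ) (t p : ℕ → ℝ) : Measure ℝ :=
  ∑ k ∈ Finset.Icc 1 r, ENNReal.ofReal (p k) • Measure.dirac (t k)

/-- The cdf of a probability measure without atoms is continuous. -/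
lemma cdf_continuous_of_forall_singleton (ν : Measure ℝ) [IsProbabilityMeasure ν]
    (h : ∀ x : ℝ, ν {x} = 0) : Continuous (cdf ν) := by
  rw [continuous_iff_continuousAt]
  intro x
  rw [(monotone_cdf ν).continuousAt_iff_leftLim_eq_rightLim]
  have hright : Function.rightLim (cdf ν) x = cdf ν x :=
    (monotone_cdf ν).continuousWithinAt_Ioi_iff_rightLim_eq.mp
      (((cdf ν).right_continuous x).mono Ioi_subset_Ici_self)
  have hleft : Function.leftLim (cdf ν) x = cdf ν x := by
    have h1 : (cdf ν).measure {x} = 0 := by rw [measure_cdf]; exact h x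
    rw [StieltjesFunction.measure_singleton] at h1
    have h2 : cdf ν x - Function.leftLim (cdf ν) x ≤ 0 := ENNReal.ofReal_eq_zero.mp h1
    have h3 : Function.leftLim (cdf ν) x ≤ cdf ν x := (monotone_cdf ν).leftLim_le le_rfl
    linarith
  rw [hleft, hright]

/-- Existence of quantiles for a probability measure with continuous cdf. -/
lemma exists_cdf_eq (ν : Measure ℝ) [IsProbabilityMeasure ν] (hcont : Continuous (cdf ν))
    {q : ℝ} (h0 : 0 < q) (h1 : q < 1) : ∃ x : ℝ, cdf ν x = q := by
  obtain ⟨x, hx⟩ : ∃ x, cdf ν x < q := ((tendsto_cdf_atBot ν).eventually_lt_const h0).exists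
  obtain ⟨y, hy⟩ : ∃ y, q < cdf ν y := ((tendsto_cdf_atTop ν).eventually_const_lt h1).exists
  have hxy : x ≤ y := by
    by_contra hcon
    push_neg at hcon
    have := monotone_cdf ν hcon.le
    linarith
  obtain ⟨z, _, hz⟩ := intermediate_value_Icc hxy (hcont.continuousOn) ⟨hx.le, hy.le⟩
  exact ⟨z, hz⟩

/-- there exists an `𝔽`-stopping time (finite-valued, being `ℝ`-valued)
whose law is `μ = ∑_{k=1}^r p_k δ_{t_k}`. -/
theorem exists_stopping_time_with_atomic_law
    {Ω : Type*} {m : MeasurableSpace Ω} (P : Measure Ω) [IsProbabilityMeasure P]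
    (W : ℝ → Ω → ℝ) (ℱ : Filtration ℝ m)
    -- `W` is a standard Brownian motion:
    (hWmeas : ∀ s : ℝ, Measurable (W s))
    (hW0 : ∀ᵐ ω ∂P, W 0 ω = 0)
    (hWcont : ∀ᵐ ω ∂P, Continuous fun s => W s ω)
    (hWindep : ∀ s u : ℝ, 0 ≤ s → s ≤ u →
      Indep (MeasurableSpace.comap (fun ω => W u ω - W s ω) (borel ℝ))
        (⨆ v ∈ Set.Icc (0:ℝ) s, MeasurableSpace.comap (W v) (borel ℝ)) P)
    (hWlaw : ∀ s u : ℝ, 0 ≤ s → s ≤ u →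
      Measure.map (fun ω => W u ω - W s ω) P = gaussianReal 0 (Real.toNNReal (u - s)))
    -- `ℱ` is the natural filtration of `W` augmented by the `P`-null sets:
    (hWadapted : ∀ s : ℝ, 0 ≤ s → StronglyMeasurable[ℱ s] (W s))
    (hℱindep : ∀ s u : ℝ, 0 ≤ s → s ≤ u →
      Indep (MeasurableSpace.comap (fun ω => W u ω - W s ω) (borel ℝ)) (ℱ s) P)
    (hNull : ∀ s : ℝ, ∀ N : Set Ω, MeasurableSet N → P N = 0 → MeasurableSet[ℱ s] N)
    -- times and weights:
    (r : ℕ) (hr : 1 ≤ r) (t : ℕ → ℝ) (ht0 : t 0 = 0)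
    (htmono : ∀ k, k < r → t k < t (k + 1))
    (p : ℕ → ℝ) (hp : ∀ k ∈ Finset.Icc 1 r, 0 < p k)
    (hpsum : ∑ k ∈ Finset.Icc 1 r, p k = 1) :
    ∃ τ : Ω → ℝ, IsStoppingTime ℱ (fun ω => (τ ω : WithTop ℝ)) ∧ Measure.map τ P = atomicLaw r t p := by
  classical
  have ht1 : 0 < t 1 := ht0 ▸ htmono 0 hr
  set v : NNReal := Real.toNNReal (t 1) with hvdef
  have hv : v ≠ 0 := by
    rw [hvdef]
    simp only [ne_eq, Real.toNNReal_eq_zero, not_le]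
    exact ht1
  set ν : Measure ℝ := gaussianReal 0 v with hν
  haveI hνprob : IsProbabilityMeasure ν := by rw [hν]; infer_instance
  -- the law of `W (t 1)` is `ν`
  have hmap : Measure.map (W (t 1)) P = ν := by
    have h := hWlaw 0 (t 1) le_rfl ht1.le
    rw [sub_zero] at h
    rw [hν, hvdef, ← h]
    apply Measure.map_congr
    filter_upwards [hW0] with ω hω
    rw [hω, sub_zero]
  -- `ν` has no atoms, hence a continuous cdf
  have hatom : ∀ x : ℝ, ν {x} = 0 := by
    intro x
    rw [hν]
    exact gaussianReal_absolutelyContinuous 0 hv (measure_singleton x)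
  have hcdf_cont : Continuous (cdf ν) := cdf_continuous_of_forall_singleton ν hatom
  -- cumulative sums of the weights
  set c : ℕ → ℝ := fun k => ∑ j ∈ Finset.Icc 1 k, p j with hc
  have hc0 : c 0 = 0 := by simp [hc]
  have hcr : c r = 1 := by rw [hc]; exact hpsum
  have hcstep : ∀ k, 1 ≤ k → k ≤ r → c k = c (k - 1) + p k := by
    intro k hk1 hkr
    obtain ⟨j, rfl⟩ : ∃ j, k = j + 1 := ⟨k - 1, (Nat.succ_pred_eq_of_pos hk1).symm⟩
    simp only [hc, Nat.add_sub_cancel]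
    exact Finset.sum_Icc_succ_top (Nat.le_add_left 1 j) p
  have hcmono : ∀ j k, j ≤ k → k ≤ r → c j ≤ c k := by
    intro j k hjk hkr
    apply Finset.sum_le_sum_of_subset_of_nonneg (Finset.Icc_subset_Icc_right hjk)
    intro i hi _
    obtain ⟨hi1, hik⟩ := Finset.mem_Icc.mp hi
    exact (hp i (Finset.mem_Icc.mpr ⟨hi1, hik.trans hkr⟩)).le
  have hcnonneg : ∀ k, k ≤ r → 0 ≤ c k := by
    intro k h
    rw [← hc0]; exact hcmono 0 k (Nat.zero_le k) h
  have hcstrict : ∀ j k, j < k → k ≤ r → c j < c k := by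
    intro j k hjk hkr
    have hk1 : 1 ≤ k := by omega
    have hstep := hcstep k hk1 hkr
    have hmono := hcmono j (k - 1) (by omega) (le_trans (Nat.sub_le k 1) hkr)
    have hpk : 0 < p k := hp k (Finset.mem_Icc.mpr ⟨hk1, hkr⟩)
    linarith
  -- choose quantiles
  have hquant : ∀ k, 1 ≤ k → k < r → ∃ x : ℝ, cdf ν x = c k := by
    intro k hk1 hkr
    refine exists_cdf_eq ν hcdf_cont ?_ ?_
    · rw [← hc0]; exact hcstrict 0 k hk1 hkr.le
    · rw [← hcr]; exact hcstrict k r hkr le_rfl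
  have haex : ∃ a : ℕ → ℝ, ∀ k, 1 ≤ k → k < r → cdf ν (a k) = c k := by
    refine ⟨fun k => if h : 1 ≤ k ∧ k < r then (hquant k h.1 h.2).choose else 0, ?_⟩
    intro k hk1 hkr
    simp only [dif_pos (And.intro hk1 hkr)]
    exact (hquant k hk1 hkr).choose_spec
  obtain ⟨a, ha⟩ := haex
  have hamono : ∀ j k, 1 ≤ j → j < k → k < r → a j < a k := by
    intro j k hj hjk hkr
    by_contra hcon
    push_neg at hcon
    have h1 : cdf ν (a k) ≤ cdf ν (a j) := monotone_cdf ν hcon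
    rw [ha j hj (hjk.trans hkr), ha k (le_trans hj hjk.le) hkr] at h1
    have h2 : c j < c k := hcstrict j k hjk hkr.le
    linarith
  -- the index function
  set g : ℝ → ℕ := fun x => 1 + ((Finset.Ico 1 r).filter (fun j => a j < x)).card with hg
  have hg_ge1 : ∀ x, 1 ≤ g x := fun x => Nat.le_add_right 1 _
  have hg_le_r : ∀ x, g x ≤ r := by
    intro x
    have h1 : ((Finset.Ico 1 r).filter (fun j => a j < x)).card ≤ (Finset.Ico 1 r).card :=
      Finset.card_le_card (Finset.filter_subset _ _)
    rw [Nat.card_Ico] at h1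
    simp only [hg]
    omega
  have hkey : ∀ k, 1 ≤ k → k < r → ∀ x : ℝ, g x ≤ k ↔ x ≤ a k := by
    intro k hk1 hkr x
    constructor
    · intro h
      by_contra hx
      push_neg at hx
      have hsub : Finset.Icc 1 k ⊆ (Finset.Ico 1 r).filter (fun j => a j < x) := by
        intro j hj
        obtain ⟨hj1, hjk⟩ := Finset.mem_Icc.mp hj
        refine Finset.mem_filter.mpr ⟨Finset.mem_Ico.mpr ⟨hj1, lt_of_le_of_lt hjk hkr⟩, ?_⟩
        rcases eq_or_lt_of_le hjk with rfl | hlt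
        · exact hx
        · exact lt_trans (hamono j k hj1 hlt hkr) hx
      have hcard := Finset.card_le_card hsub
      rw [Nat.card_Icc] at hcard
      simp only [hg] at h
      omega
    · intro hx
      have hsub : (Finset.Ico 1 r).filter (fun j => a j < x) ⊆ Finset.Ico 1 k := by
        intro j hj
        obtain ⟨hj', hja⟩ := Finset.mem_filter.mp hj
        obtain ⟨hj1, hjr⟩ := Finset.mem_Ico.mp hj'
        refine Finset.mem_Ico.mpr ⟨hj1, ?_⟩
        by_contra hjk
        push_neg at hjk
        have hak : a k ≤ a j := by
          rcases eq_or_lt_of_le hjk with rfl | hlt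
          · exact le_rfl
          · exact (hamono k j hk1 hlt hjr).le
        linarith
      have hcard := Finset.card_le_card hsub
      rw [Nat.card_Ico] at hcard
      simp only [hg]
      omega
  -- measurability of the level sets of `g`
  have hGmeas : ∀ k : ℕ, MeasurableSet {x : ℝ | g x ≤ k} := by
    intro k
    rcases Nat.eq_zero_or_pos k with rfl | hk1
    · have he : {x : ℝ | g x ≤ 0} = ∅ := by
        ext x
        simp only [mem_setOf_eq, mem_empty_iff_false, iff_false, not_le]
        exact hg_ge1 x
      rw [he]
      exact MeasurableSet.empty
    rcases lt_or_ge k r with hkr | hkr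
    · have hIic : {x : ℝ | g x ≤ k} = Iic (a k) := by
        ext x
        exact hkey k hk1 hkr x
      rw [hIic]
      exact measurableSet_Iic
    · have huniv : {x : ℝ | g x ≤ k} = univ :=
        eq_univ_of_forall fun x => le_trans (hg_le_r x) hkr
      rw [huniv]
      exact MeasurableSet.univ
  have hfib : ∀ k : ℕ, 1 ≤ k → {x : ℝ | g x = k} = {x | g x ≤ k} \ {x | g x ≤ k - 1} := by
    intro k hk
    ext x
    simp only [mem_setOf_eq, mem_diff, mem_setOf_eq]
    omega
  have hgmeas : Measurable g := by
    apply measurable_to_countable'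
    intro k
    have hpre : g ⁻¹' {k} = {x : ℝ | g x = k} := by
      ext x
      simp [Set.mem_preimage]
    rcases Nat.eq_zero_or_pos k with rfl | hk1
    · have he : g ⁻¹' {0} = ∅ := by
        rw [hpre]
        ext x
        simp only [mem_setOf_eq, mem_empty_iff_false, iff_false]
        have := hg_ge1 x
        omega
      rw [he]
      exact MeasurableSet.empty
    · rw [hpre, hfib k hk1]
      exact (hGmeas k).diff (hGmeas (k - 1))
  -- measure of the level sets and fibers of `g`
  have hGle : ∀ k, k ≤ r → ν {x : ℝ | g x ≤ k} = ENNReal.ofReal (c k) := by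
    intro k hkr
    rcases Nat.eq_zero_or_pos k with rfl | hk1
    · have he : {x : ℝ | g x ≤ 0} = ∅ := by
        ext x
        simp only [mem_setOf_eq, mem_empty_iff_false, iff_false, not_le]
        exact hg_ge1 x
      rw [he, hc0]
      simp
    rcases lt_or_eq_of_le hkr with hlt | heq
    · have hIic : {x : ℝ | g x ≤ k} = Iic (a k) := by
        ext x
        exact hkey k hk1 hlt x
      rw [hIic, ← ofReal_cdf ν, ha k hk1 hlt]
    · subst heq
      have huniv : {x : ℝ | g x ≤ k} = univ :=
        eq_univ_of_forall fun x => hg_le_r x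
      rw [huniv, measure_univ, hcr]
      simp
  have hfibmeas : ∀ k, 1 ≤ k → k ≤ r → ν {x : ℝ | g x = k} = ENNReal.ofReal (p k) := by
    intro k hk1 hkr
    rw [hfib k hk1]
    have hsub : {x : ℝ | g x ≤ k - 1} ⊆ {x : ℝ | g x ≤ k} := by
      intro x hx
      simp only [mem_setOf_eq] at hx ⊢
      omega
    rw [measure_diff hsub (hGmeas (k - 1)).nullMeasurableSet (measure_ne_top ν _),
      hGle k hkr, hGle (k - 1) (le_trans (Nat.sub_le k 1) hkr),
      ← ENNReal.ofReal_sub _ (hcnonneg (k - 1) (le_trans (Nat.sub_le k 1) hkr))]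
    congr 1
    have := hcstep k hk1 hkr
    linarith
  -- the stopping time
  have ht_le : ∀ j k, j ≤ k → k ≤ r → t j ≤ t k := by
    intro j k hjk hkr
    induction k with
    | zero =>
      have : j = 0 := Nat.le_zero.mp hjk
      rw [this]
    | succ n ih =>
      rcases Nat.lt_or_ge j (n + 1) with h | h
      · have h1 : t j ≤ t n := ih (Nat.lt_succ_iff.mp h) (le_trans (Nat.le_succ n) hkr)
        exact h1.trans (htmono n (by omega)).le
      · have : j = n + 1 := le_antisymm hjk h
        rw [this]
  have httg : Measurable (fun x : ℝ => t (g x)) := measurable_from_top.comp hgmeas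
  set τ : Ω → ℝ := fun ω => t (g (W (t 1) ω)) with hτ
  have hτmeas : Measurable τ := httg.comp (hWmeas (t 1))
  have hstop : IsStoppingTime ℱ (fun ω => (τ ω : WithTop ℝ)) := by
    intro s
    simp only [WithTop.coe_le_coe]
    rcases lt_or_ge s (t 1) with hs | hs
    · have he : {ω | τ ω ≤ s} = ∅ := by
        ext ω
        simp only [mem_setOf_eq, mem_empty_iff_false, iff_false, not_le, hτ]
        exact lt_of_lt_of_le hs (ht_le 1 _ (hg_ge1 _) (hg_le_r _))
      rw [he]
      exact @MeasurableSet.empty _ (ℱ s)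
    · have hB : MeasurableSet ((fun x : ℝ => t (g x)) ⁻¹' Iic s) := httg measurableSet_Iic
      have hW1 : Measurable[ℱ s] (W (t 1)) :=
        ((hWadapted (t 1) ht1.le).measurable).mono (ℱ.mono hs) le_rfl
      exact hW1 hB
  refine ⟨τ, hstop, ?_⟩
  ext s hs
  rw [Measure.map_apply hτmeas hs]
  have hpre : τ ⁻¹' s = W (t 1) ⁻¹' ((fun x : ℝ => t (g x)) ⁻¹' s) := rfl
  rw [hpre, ← Measure.map_apply (hWmeas (t 1)) (httg hs), hmap]
  have hpre2 : (fun x : ℝ => t (g x)) ⁻¹' s = g ⁻¹' (t ⁻¹' s) := rfl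
  rw [hpre2]
  have hdecomp : g ⁻¹' (t ⁻¹' s) =
      ⋃ k ∈ (Finset.Icc 1 r).filter (fun k => t k ∈ s), {x : ℝ | g x = k} := by
    ext x
    simp only [Set.mem_preimage, Set.mem_iUnion, mem_setOf_eq, Finset.mem_filter,
      Finset.mem_Icc, exists_prop]
    constructor
    · intro hx
      exact ⟨g x, ⟨⟨hg_ge1 x, hg_le_r x⟩, hx⟩, rfl⟩
    · rintro ⟨k, ⟨⟨_, _⟩, hk⟩, rfl⟩
      exact hk
  rw [hdecomp, measure_biUnion_finset]
  · have hsum : ∀ k ∈ (Finset.Icc 1 r).filter (fun k => t k ∈ s),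
        ν {x : ℝ | g x = k} = ENNReal.ofReal (p k) := by
      intro k hk
      obtain ⟨hk', _⟩ := Finset.mem_filter.mp hk
      obtain ⟨hk1, hkr⟩ := Finset.mem_Icc.mp hk'
      exact hfibmeas k hk1 hkr
    rw [Finset.sum_congr rfl hsum, Finset.sum_filter]
    rw [atomicLaw, Measure.finset_sum_apply]
    refine Finset.sum_congr rfl ?_
    intro k _
    rw [Measure.smul_apply, Measure.dirac_apply' _ hs, Set.indicator_apply, smul_eq_mul]
    by_cases hts : t k ∈ s
    · simp [hts]
    · simp [hts]
  · intro j hj k hk hjk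
    simp only [Function.onFun]
    rw [Set.disjoint_left]
    intro x hxj hxk
    simp only [mem_setOf_eq] at hxj hxk
    exact hjk (hxj ▸ hxk ▸ rfl)
  · intro k hk
    obtain ⟨hk', _⟩ := Finset.mem_filter.mp hk
    obtain ⟨hk1, _⟩ := Finset.mem_Icc.mp hk'
    rw [hfib k hk1]
    exact (hGmeas k).diff (hGmeas (k - 1))

end
end

section
/- Let p, p' ∈ [0,1]^r satisfy p_1 + ⋯ + p_r = 1 and p'_1 + ⋯ + p'_r = 1. For every 𝔽-stopping time τ whose law equals Σ_{k=1}^r p_k δ_{t_k}, there exists an 𝔽-stopping time τ' whose law equals Σ_{k=1}^r p'_k δ_{t_k} and which satisfies ℙ[τ ≠ τ'] ≤ 4^r · ‖p − p'‖_{ℓ¹}, where ‖p − p'‖_{ℓ¹} = Σ_{k=1}^r |p_k − p'_k|. -/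
open MeasureTheory ProbabilityTheory Set

noncomputable section

section Aux

open Filter Topology

namespace StoppingAux

lemma exists_cut {Ω : Type*} {m : MeasurableSpace Ω} (P : Measure Ω) [IsProbabilityMeasure P]
    (X : Ω → ℝ) (hX : Measurable X) (hatom : ∀ c : ℝ, P {ω | X ω = c} = 0)
    (A : Set Ω) (hA : MeasurableSet A) (v : ℝ) (h0 : 0 ≤ v) (hv : v ≤ (P A).toReal) :
    ∃ C : Set Ω, (C = ∅ ∨ C = Set.univ ∨ ∃ c : ℝ, C = {ω | X ω ≤ c}) ∧
      P (A ∩ C) = ENNReal.ofReal v := by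
  have hIic : ∀ c : ℝ, MeasurableSet {ω | X ω ≤ c} := fun c => hX measurableSet_Iic
  rcases eq_or_lt_of_le h0 with h0' | h0'
  · exact ⟨∅, Or.inl rfl, by simp [← h0']⟩
  rcases eq_or_lt_of_le hv with hv' | hv'
  · refine ⟨Set.univ, Or.inr (Or.inl rfl), ?_⟩
    rw [Set.inter_univ, hv', ENNReal.ofReal_toReal (measure_ne_top P A)]
  set φ : ℝ → ℝ := fun c => (P (A ∩ {ω | X ω ≤ c})).toReal with hφ
  have hmono : Monotone φ := by
    intro a b hab
    exact ENNReal.toReal_mono (measure_ne_top P _)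
      (measure_mono (Set.inter_subset_inter_right _ (fun ω (h : X ω ≤ a) => h.trans hab)))
  have hsplit : ∀ a b : ℝ, a ≤ b →
      P (A ∩ {ω | X ω ≤ b}) = P (A ∩ {ω | X ω ≤ a}) + P (A ∩ {ω | a < X ω ∧ X ω ≤ b}) := by
    intro a b hab
    have hset : A ∩ {ω | X ω ≤ b}
        = (A ∩ {ω | X ω ≤ a}) ∪ (A ∩ {ω | a < X ω ∧ X ω ≤ b}) := by
      ext ω
      simp only [Set.mem_inter_iff, Set.mem_setOf_eq, Set.mem_union]
      constructor
      · rintro ⟨h1, h2⟩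
        rcases le_or_gt (X ω) a with h | h
        · exact Or.inl ⟨h1, h⟩
        · exact Or.inr ⟨h1, h, h2⟩
      · rintro (⟨h1, h2⟩ | ⟨h1, h2, h3⟩)
        · exact ⟨h1, h2.trans hab⟩
        · exact ⟨h1, h3⟩
    rw [hset]
    refine measure_union ?_ (hA.inter (hX measurableSet_Ioc))
    rw [Set.disjoint_left]
    rintro ω ⟨_, h⟩ ⟨_, h1, _⟩
    exact absurd h (not_le.2 h1)
  have hcont : Continuous φ := by
    rw [continuous_iff_continuousAt]
    intro c
    rw [Metric.continuousAt_iff]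
    intro ε hε
    set S : ℕ → Set Ω := fun n => A ∩ {ω | c - 1/(n+1) < X ω ∧ X ω ≤ c + 1/(n+1)} with hS
    have hSmeas : ∀ n : ℕ, MeasurableSet (S n) := fun n => hA.inter (hX measurableSet_Ioc)
    have hSanti : Antitone S := by
      intro i j hij
      apply Set.inter_subset_inter_right
      rintro ω ⟨h1, h2⟩
      have hle : (1:ℝ)/(j+1) ≤ 1/(i+1) := by
        apply one_div_le_one_div_of_le
        · positivity
        · exact_mod_cast (Nat.add_le_add_right hij 1 : i + 1 ≤ j + 1)
      exact ⟨by linarith, by linarith⟩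
    have hSint : ⋂ n, S n ⊆ {ω | X ω = c} := by
      intro ω hω
      simp only [Set.mem_iInter, hS, Set.mem_inter_iff, Set.mem_setOf_eq] at hω
      have h1 : X ω ≤ c := by
        by_contra hlt
        push_neg at hlt
        obtain ⟨n, hn⟩ := exists_nat_one_div_lt (sub_pos.2 hlt)
        linarith [(hω n).2.2]
      have h2 : c ≤ X ω := by
        by_contra hlt
        push_neg at hlt
        obtain ⟨n, hn⟩ := exists_nat_one_div_lt (sub_pos.2 hlt)
        linarith [(hω n).2.1]
      exact le_antisymm h1 h2
    have htend : Tendsto (fun n => P (S n)) atTop (𝓝 (P (⋂ n, S n))) :=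
      tendsto_measure_iInter_atTop (fun n => (hSmeas n).nullMeasurableSet) hSanti
        ⟨0, measure_ne_top P _⟩
    have hIzero : P (⋂ n, S n) = 0 := measure_mono_null hSint (hatom c)
    rw [hIzero] at htend
    obtain ⟨n, hn⟩ := (htend.eventually_lt_const (ENNReal.ofReal_pos.2 hε)).exists
    have hδpos : (0:ℝ) < 1/(n+1) := by positivity
    refine ⟨1/(n+1), hδpos, ?_⟩
    intro x hx
    rw [Real.dist_eq] at hx ⊢
    rcases le_total x c with hxc | hxc
    · have h1 := hsplit x c hxc
      have hsub : A ∩ {ω | x < X ω ∧ X ω ≤ c} ⊆ S n := by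
        rintro ω ⟨hωA, hω1, hω2⟩
        have hcx : c - x < 1/(n+1) := by
          rw [abs_sub_comm] at hx
          exact lt_of_le_of_lt (le_abs_self _) hx
        exact ⟨hωA, by linarith, by linarith⟩
      have e1 : φ c = φ x + (P (A ∩ {ω | x < X ω ∧ X ω ≤ c})).toReal := by
        simp only [hφ]
        rw [h1, ENNReal.toReal_add (measure_ne_top P _) (measure_ne_top P _)]
      have e2 : (P (A ∩ {ω | x < X ω ∧ X ω ≤ c})).toReal < ε :=
        lt_of_le_of_lt (ENNReal.toReal_mono (measure_ne_top P _) (measure_mono hsub))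
          (ENNReal.toReal_lt_of_lt_ofReal hn)
      rw [abs_of_nonpos (by linarith [hmono hxc] : φ x - φ c ≤ 0)]
      linarith
    · have h1 := hsplit c x hxc
      have hsub : A ∩ {ω | c < X ω ∧ X ω ≤ x} ⊆ S n := by
        rintro ω ⟨hωA, hω1, hω2⟩
        have hcx : x - c < 1/(n+1) := lt_of_le_of_lt (le_abs_self _) hx
        exact ⟨hωA, by linarith, by linarith⟩
      have e1 : φ x = φ c + (P (A ∩ {ω | c < X ω ∧ X ω ≤ x})).toReal := by
        simp only [hφ]
        rw [h1, ENNReal.toReal_add (measure_ne_top P _) (measure_ne_top P _)]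
      have e2 : (P (A ∩ {ω | c < X ω ∧ X ω ≤ x})).toReal < ε :=
        lt_of_le_of_lt (ENNReal.toReal_mono (measure_ne_top P _) (measure_mono hsub))
          (ENNReal.toReal_lt_of_lt_ofReal hn)
      rw [abs_of_nonneg (by linarith [hmono hxc] : (0:ℝ) ≤ φ x - φ c)]
      linarith
  have hbot : ∃ a : ℝ, φ a < v := by
    set L : ℕ → Set Ω := fun n => A ∩ {ω | X ω ≤ -(n:ℝ)} with hL
    have hLanti : Antitone L := by
      intro i j hij
      apply Set.inter_subset_inter_right
      intro ω (h : X ω ≤ -(j:ℝ))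
      exact h.trans (neg_le_neg (Nat.cast_le.2 hij))
    have hLint : ⋂ n, L n = ∅ := by
      ext ω
      simp only [Set.mem_iInter, Set.mem_empty_iff_false, iff_false, not_forall]
      by_contra hcon
      push_neg at hcon
      obtain ⟨n, hn⟩ := exists_nat_gt (-X ω)
      have := (hcon n).2
      simp only [Set.mem_setOf_eq] at this
      linarith
    have htend : Tendsto (fun n => P (L n)) atTop (𝓝 (P (⋂ n, L n))) :=
      tendsto_measure_iInter_atTop (fun n => (hA.inter (hIic _)).nullMeasurableSet) hLanti
        ⟨0, measure_ne_top P _⟩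
    rw [hLint, measure_empty] at htend
    obtain ⟨n, hn⟩ := (htend.eventually_lt_const (ENNReal.ofReal_pos.2 h0')).exists
    exact ⟨-(n:ℝ), ENNReal.toReal_lt_of_lt_ofReal hn⟩
  have htop : ∃ b : ℝ, v < φ b := by
    set U : ℕ → Set Ω := fun n => A ∩ {ω | X ω ≤ (n:ℝ)} with hU
    have hUmono : Monotone U := by
      intro i j hij
      apply Set.inter_subset_inter_right
      intro ω (h : X ω ≤ (i:ℝ))
      exact h.trans (Nat.cast_le.2 hij)
    have hUnion : ⋃ n, U n = A := by
      apply Set.Subset.antisymm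
      · exact Set.iUnion_subset fun n => Set.inter_subset_left
      · intro ω hω
        obtain ⟨n, hn⟩ := exists_nat_gt (X ω)
        exact Set.mem_iUnion.2 ⟨n, hω, hn.le⟩
    have htend : Tendsto (fun n => P (U n)) atTop (𝓝 (P A)) := by
      have h := tendsto_measure_iUnion_atTop (μ := P) hUmono
      rw [hUnion] at h
      exact h
    have hlt : ENNReal.ofReal v < P A :=
      (ENNReal.ofReal_lt_iff_lt_toReal h0 (measure_ne_top P _)).2 hv'
    obtain ⟨n, hn⟩ := (htend.eventually_const_lt hlt).exists
    refine ⟨(n:ℝ), ?_⟩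
    have := (ENNReal.ofReal_lt_iff_lt_toReal h0 (measure_ne_top P _)).1 hn
    exact this
  obtain ⟨a, ha⟩ := hbot
  obtain ⟨b, hb⟩ := htop
  have hab : a ≤ b := by
    by_contra hab
    push_neg at hab
    have := hmono hab.le
    linarith
  obtain ⟨c, _, hc⟩ := intermediate_value_Icc hab hcont.continuousOn ⟨ha.le, hb.le⟩
  refine ⟨{ω | X ω ≤ c}, Or.inr (Or.inr ⟨c, rfl⟩), ?_⟩
  have hne : P (A ∩ {ω | X ω ≤ c}) ≠ ⊤ := measure_ne_top P _
  rw [← hc]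
  exact (ENNReal.ofReal_toReal hne).symm

end StoppingAux

theorem StoppingAux.main
    {Ω : Type*} {m : MeasurableSpace Ω} (P : Measure Ω) [IsProbabilityMeasure P]
    (W : ℝ → Ω → ℝ) (ℱ : Filtration ℝ m)
    (hWmeas : ∀ s : ℝ, Measurable (W s))
    (hW0 : ∀ᵐ ω ∂P, W 0 ω = 0)
    (hWlaw : ∀ s u : ℝ, 0 ≤ s → s ≤ u →
      Measure.map (fun ω => W u ω - W s ω) P = gaussianReal 0 (Real.toNNReal (u - s)))
    (hWadapted : ∀ s : ℝ, 0 ≤ s → StronglyMeasurable[ℱ s] (W s))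
    (r : ℕ) (hr : 1 ≤ r) (t : ℕ → ℝ) (ht0 : t 0 = 0)
    (htmono : ∀ k, k < r → t k < t (k + 1))
    (p p' : ℕ → ℝ)
    (hp : ∀ k ∈ Finset.Icc 1 r, p k ∈ Set.Icc (0:ℝ) 1)
    (hp' : ∀ k ∈ Finset.Icc 1 r, p' k ∈ Set.Icc (0:ℝ) 1)
    (hpsum : ∑ k ∈ Finset.Icc 1 r, p k = 1)
    (hp'sum : ∑ k ∈ Finset.Icc 1 r, p' k = 1)
    (τ : Ω → ℝ) (hτ : IsStoppingTime ℱ (fun ω => (τ ω : WithTop ℝ)))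
    (hτlaw : Measure.map τ P = atomicLaw r t p) :
    ∃ τ' : Ω → ℝ, IsStoppingTime ℱ (fun ω => (τ' ω : WithTop ℝ)) ∧ Measure.map τ' P = atomicLaw r t p' ∧
      P {ω | τ ω ≠ τ' ω} ≤
        ENNReal.ofReal (4 ^ r * ∑ k ∈ Finset.Icc 1 r, |p k - p' k|) := by
  classical
  obtain ⟨n, rfl⟩ : ∃ n, r = n + 1 := ⟨r - 1, by omega⟩
  -- basic measurability of τ
  have hτmeas : Measurable τ := measurable_of_Iic fun c => ℱ.le c _ (by have h := hτ c; simp only [WithTop.coe_le_coe] at h; exact h)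
  -- t is strictly monotone on {0, ..., n+1}
  have hstrict : ∀ i j : ℕ, i < j → j ≤ n + 1 → t i < t j := by
    intro i j hij hjr
    induction j with
    | zero => omega
    | succ k ih =>
      rcases Nat.lt_succ_iff_lt_or_eq.mp hij with h | h
      · exact (ih h (by omega)).trans (htmono k (by omega))
      · subst h; exact htmono i (by omega)
  have htinj : ∀ i j : ℕ, i ≤ n + 1 → j ≤ n + 1 → t i = t j → i = j := by
    intro i j hi hj hij
    by_contra hne
    rcases lt_or_gt_of_ne hne with h | h
    · exact absurd hij (ne_of_lt (hstrict i j h hj))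
    · exact absurd hij.symm (ne_of_lt (hstrict j i h hi))
  have ht1pos : 0 < t 1 := by
    have := hstrict 0 1 (by omega) (by omega)
    rwa [ht0] at this
  set X := W (t 1) with hXdef
  have hXmeas : Measurable X := hWmeas (t 1)
  have hXlaw : Measure.map X P = gaussianReal 0 (Real.toNNReal (t 1)) := by
    have h := hWlaw 0 (t 1) le_rfl ht1pos.le
    have heq : (fun ω => W (t 1) ω - W 0 ω) =ᵐ[P] X := by
      filter_upwards [hW0] with ω hω
      simp [hXdef, hω]
    rw [← Measure.map_congr heq, h, sub_zero]
  have hatom : ∀ c : ℝ, P {ω | X ω = c} = 0 := by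
    intro c
    have hpre : {ω | X ω = c} = X ⁻¹' {c} := rfl
    rw [hpre, ← Measure.map_apply hXmeas (measurableSet_singleton c), hXlaw]
    have hv : (Real.toNNReal (t 1)) ≠ 0 := by
      simp only [ne_eq, Real.toNNReal_eq_zero, not_le]
      exact ht1pos
    exact gaussianReal_absolutelyContinuous 0 hv (measure_singleton c)
  -- measurability of the level sets of τ
  have hTmeas : ∀ k : ℕ, MeasurableSet {ω | τ ω = t k} :=
    fun k => hτmeas (measurableSet_singleton (t k))
  have hTF : ∀ k : ℕ, MeasurableSet[ℱ (t k)] {ω | τ ω = t k} :=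
    fun k => by simpa using hτ.measurableSet_eq (t k)
  -- value of the law of τ on atoms
  have hTval : ∀ k ∈ Finset.Icc 1 (n+1), P {ω | τ ω = t k} = ENNReal.ofReal (p k) := by
    intro k hk
    have hpre : {ω | τ ω = t k} = τ ⁻¹' {t k} := rfl
    rw [hpre, ← Measure.map_apply hτmeas (measurableSet_singleton _), hτlaw, atomicLaw,
      Measure.finset_sum_apply]
    rw [Finset.sum_eq_single k]
    · rw [Measure.smul_apply, Measure.dirac_apply' _ (measurableSet_singleton _),
        Set.indicator_of_mem (Set.mem_singleton _), Pi.one_apply, smul_eq_mul, mul_one]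
    · intro j hj hjk
      rw [Measure.smul_apply, Measure.dirac_apply' _ (measurableSet_singleton _)]
      have hne : t j ∉ ({t k} : Set ℝ) := by
        simp only [Set.mem_singleton_iff]
        intro h
        exact hjk (htinj j k (by simp at hj; omega) (by simp at hk; omega) h)
      rw [Set.indicator_of_notMem hne, smul_eq_mul, mul_zero]
    · intro h; exact absurd hk h
  -- τ is a.s. in the atoms
  have hAtomsAE : P (τ ⁻¹' (↑((Finset.Icc 1 (n+1)).image t) : Set ℝ)ᶜ) = 0 := by
    rw [← Measure.map_apply hτmeas ((Finset.Icc 1 (n+1)).image t).measurableSet.compl, hτlaw,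
      atomicLaw, Measure.finset_sum_apply]
    refine Finset.sum_eq_zero fun j hj => ?_
    rw [Measure.smul_apply, Measure.dirac_apply' _ ((Finset.Icc 1 (n+1)).image t).measurableSet.compl]
    have : t j ∈ (↑((Finset.Icc 1 (n+1)).image t) : Set ℝ) := by
      simp only [Finset.coe_image, Set.mem_image, Finset.mem_coe]
      exact ⟨j, hj, rfl⟩
    rw [Set.indicator_of_notMem (fun hmem => (Set.mem_compl_iff _ _).1 hmem this), smul_eq_mul, mul_zero]
  have ht1le : ∀ j : ℕ, 1 ≤ j → j ≤ n + 1 → t 1 ≤ t j := by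
    intro j h1 h2
    rcases eq_or_lt_of_le h1 with h | h
    · rw [← h]
    · exact (hstrict 1 j h h2).le
  -- the inductive construction of the pieces of τ'
  have build : ∀ k : ℕ, k ≤ n → ∃ D : ℕ → Set Ω,
      (∀ j ∈ Finset.Icc 1 k, MeasurableSet[ℱ (t j)] (D j)) ∧
      (∀ i ∈ Finset.Icc 1 k, ∀ j ∈ Finset.Icc 1 k, i ≠ j → Disjoint (D i) (D j)) ∧
      (∀ j ∈ Finset.Icc 1 k, P (D j) = ENNReal.ofReal (p' j)) ∧
      (∀ j ∈ Finset.Icc 1 k, (P (D j \ {ω | τ ω = t j})).toReal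
          ≤ |p j - p' j| + ∑ i ∈ Finset.Icc 1 (j-1), (P (D i \ {ω | τ ω = t i})).toReal) := by
    intro k
    induction k with
    | zero => intro _; exact ⟨fun _ => ∅, by simp, by simp, by simp, by simp⟩
    | succ j ih =>
      intro hj
      obtain ⟨D, hD1, hD2, hD3, hD4⟩ := ih (by omega)
      have hDm : ∀ i ∈ Finset.Icc 1 j, MeasurableSet (D i) := fun i hi => ℱ.le (t i) _ (hD1 i hi)
      set R := (⋃ i ∈ Finset.Icc 1 j, D i)ᶜ with hR
      have hUm : MeasurableSet (⋃ i ∈ Finset.Icc 1 j, D i) :=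
        Finset.measurableSet_biUnion _ hDm
      have hRm : MeasurableSet R := hUm.compl
      have hRF : MeasurableSet[ℱ (t (j+1))] R := by
        refine MeasurableSet.compl ?_
        refine Finset.measurableSet_biUnion _ fun i hi => ?_
        have hle : t i ≤ t (j+1) := (hstrict i (j+1) (by simp at hi; omega) (by omega)).le
        exact ℱ.mono hle _ (hD1 i hi)
      have hDsubR : ∀ i ∈ Finset.Icc 1 j, Disjoint (D i) R := by
        intro i hi
        rw [Set.disjoint_left]
        intro ω hω hωR
        exact hωR (Set.mem_biUnion hi hω)
      have hPU : P (⋃ i ∈ Finset.Icc 1 j, D i)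
          = ENNReal.ofReal (∑ i ∈ Finset.Icc 1 j, p' i) := by
        rw [measure_biUnion_finset ?_ hDm]
        · rw [Finset.sum_congr rfl hD3,
            ← ENNReal.ofReal_sum_of_nonneg (fun i hi => (hp' i (Finset.Icc_subset_Icc_right (by omega) hi)).1)]
        · intro a ha b hb hab
          exact hD2 a (Finset.mem_coe.1 ha) b (Finset.mem_coe.1 hb) hab
      have hPR : P R = 1 - ENNReal.ofReal (∑ i ∈ Finset.Icc 1 j, p' i) := by
        rw [hR, measure_compl hUm (measure_ne_top P _), measure_univ, hPU]
      have hsum_le : ∑ i ∈ Finset.Icc 1 j, p' i + p' (j+1) ≤ 1 := by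
        have h1 : ∑ i ∈ Finset.Icc 1 (j+1), p' i ≤ ∑ i ∈ Finset.Icc 1 (n+1), p' i :=
          Finset.sum_le_sum_of_subset_of_nonneg (Finset.Icc_subset_Icc_right (by omega))
            (fun i hi _ => (hp' i hi).1)
        rw [← Finset.insert_Icc_right_eq_Icc_add_one (by omega), Finset.sum_insert (by simp), hp'sum] at h1
        linarith
      set T := {ω | τ ω = t (j+1)} with hT
      have hTm : MeasurableSet T := hTmeas (j+1)
      set A := T ∩ R with hA'
      have hAm : MeasurableSet A := hTm.inter hRm
      have hAF : MeasurableSet[ℱ (t (j+1))] A := (hTF (j+1)).inter hRF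
      have hASubT : A ⊆ T := Set.inter_subset_left
      have hASubR : A ⊆ R := Set.inter_subset_right
      have hp'j : 0 ≤ p' (j+1) := (hp' (j+1) (by simp only [Finset.mem_Icc]; omega)).1
      have hpj : 0 ≤ p (j+1) := (hp (j+1) (by simp only [Finset.mem_Icc]; omega)).1
      have hPT : P T = ENNReal.ofReal (p (j+1)) := hTval (j+1) (by simp only [Finset.mem_Icc]; omega)
      have hTbound : p (j+1) ≤ (P A).toReal
          + ∑ i ∈ Finset.Icc 1 j, (P (D i \ {ω | τ ω = t i})).toReal := by
        have hsplitT : P T = P (T ∩ R) + P (T \ R) := (measure_inter_add_diff T hRm).symm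
        have hsub : T \ R ⊆ ⋃ i ∈ Finset.Icc 1 j, (D i \ {ω | τ ω = t i}) := by
          rintro ω ⟨hωT, hωR⟩
          have hωU : ω ∈ ⋃ i ∈ Finset.Icc 1 j, D i := by
            by_contra hcon
            exact hωR hcon
          obtain ⟨i, hi, hωi⟩ := Set.mem_iUnion₂.1 hωU
          refine Set.mem_biUnion hi ⟨hωi, ?_⟩
          intro hτi
          have h1 : τ ω = t (j+1) := hωT
          have h2 : t i = t (j+1) := by rw [← hτi]; exact h1
          have := htinj i (j+1) (by simp at hi; omega) (by omega) h2
          simp at hi; omega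
        have h2 : P (T \ R) ≤ ∑ i ∈ Finset.Icc 1 j, P (D i \ {ω | τ ω = t i}) :=
          (measure_mono hsub).trans (measure_biUnion_finset_le _ _)
        have h3 : (P T).toReal = (P A).toReal + (P (T \ R)).toReal := by
          rw [hsplitT, ENNReal.toReal_add (measure_ne_top P _) (measure_ne_top P _), hA']
        have h4 : (P (T \ R)).toReal
            ≤ ∑ i ∈ Finset.Icc 1 j, (P (D i \ {ω | τ ω = t i})).toReal := by
          rw [← ENNReal.toReal_sum (fun i _ => measure_ne_top P _)]
          exact ENNReal.toReal_mono
            (ENNReal.sum_lt_top.2 (fun i _ => measure_lt_top P _)).ne h2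
        have h5 : (P T).toReal = p (j+1) := by rw [hPT, ENNReal.toReal_ofReal hpj]
        linarith
      have ht1le' : t 1 ≤ t (j+1) := ht1le (j+1) (by omega) (by omega)
      by_cases hcase : ENNReal.ofReal (p' (j+1)) ≤ P A
      · -- carve the new piece out of A
        have hvle : p' (j+1) ≤ (P A).toReal :=
          (ENNReal.ofReal_le_iff_le_toReal (measure_ne_top P _)).1 hcase
        obtain ⟨C, hCdesc, hCP⟩ :=
          StoppingAux.exists_cut P X hXmeas hatom A hAm (p' (j+1)) hp'j hvle
        have hCF : MeasurableSet[ℱ (t 1)] C := by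
          rcases hCdesc with rfl | rfl | ⟨c, rfl⟩
          · exact @MeasurableSet.empty _ (ℱ (t 1))
          · exact @MeasurableSet.univ _ (ℱ (t 1))
          · have hXF : Measurable[ℱ (t 1)] X := (hWadapted (t 1) ht1pos.le).measurable
            exact hXF measurableSet_Iic
        set Dnew := A ∩ C with hDnew
        have hDnewSubR : Dnew ⊆ R := Set.inter_subset_left.trans hASubR
        have hDnewF : MeasurableSet[ℱ (t (j+1))] Dnew :=
          hAF.inter (ℱ.mono ht1le' _ hCF)
        refine ⟨Function.update D (j+1) Dnew, ?_, ?_, ?_, ?_⟩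
        · intro i hi
          rcases eq_or_ne i (j+1) with rfl | hne
          · rw [Function.update_self]; exact hDnewF
          · rw [Function.update_of_ne hne]
            exact hD1 i (by simp at hi ⊢; omega)
        · intro a ha b hb hab
          rcases eq_or_ne a (j+1) with rfl | hnea
          · rw [Function.update_self, Function.update_of_ne (Ne.symm hab)]
            have hb' : b ∈ Finset.Icc 1 j := by simp at hb ⊢; omega
            exact (hDsubR b hb').symm.mono_left hDnewSubR
          · rw [Function.update_of_ne hnea]
            rcases eq_or_ne b (j+1) with rfl | hneb
            · rw [Function.update_self]
              have ha' : a ∈ Finset.Icc 1 j := by simp at ha ⊢; omega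
              exact ((hDsubR a ha').symm.mono_left hDnewSubR).symm
            · rw [Function.update_of_ne hneb]
              exact hD2 a (by simp at ha ⊢; omega) b (by simp at hb ⊢; omega) hab
        · intro i hi
          rcases eq_or_ne i (j+1) with rfl | hne
          · rw [Function.update_self]; exact hCP
          · rw [Function.update_of_ne hne]
            exact hD3 i (by simp at hi ⊢; omega)
        · intro i hi
          rcases eq_or_ne i (j+1) with rfl | hne
          · rw [Function.update_self]
            have hempty : Dnew \ {ω | τ ω = t (j+1)} = ∅ :=
              Set.diff_eq_empty.2 (Set.inter_subset_left.trans hASubT)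
            rw [hempty]
            simp only [measure_empty, ENNReal.toReal_zero]
            have : (0:ℝ) ≤ ∑ i' ∈ Finset.Icc 1 (j+1-1),
                (P ((Function.update D (j+1) Dnew) i' \ {ω | τ ω = t i'})).toReal :=
              Finset.sum_nonneg fun _ _ => ENNReal.toReal_nonneg
            have habs : (0:ℝ) ≤ |p (j+1) - p' (j+1)| := abs_nonneg _
            linarith
          · rw [Function.update_of_ne hne]
            have hi' : i ∈ Finset.Icc 1 j := by simp at hi ⊢; omega
            have hix : ∀ i' ∈ Finset.Icc 1 (i-1),
                (Function.update D (j+1) Dnew) i' = D i' := by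
              intro i' hi'2
              refine Function.update_of_ne ?_ _ _
              simp at hi'2 hi'; omega
            rw [Finset.sum_congr rfl (fun i' hi'2 => by rw [hix i' hi'2])]
            exact hD4 i hi'
      · -- A is too small: add a piece of R \ T
        push_neg at hcase
        set G := R \ T with hG
        have hGm : MeasurableSet G := hRm.diff hTm
        have hGF : MeasurableSet[ℱ (t (j+1))] G := hRF.diff (hTF (j+1))
        have hPRA : P R = P A + P G := by
          rw [hA', Set.inter_comm, hG]
          exact (measure_inter_add_diff R hTm).symm
        set aR := (P A).toReal with haRdef
        have hPAofReal : P A = ENNReal.ofReal aR := (ENNReal.ofReal_toReal (measure_ne_top P A)).symm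
        have haRnn : 0 ≤ aR := ENNReal.toReal_nonneg
        have haR : aR < p' (j+1) := ENNReal.toReal_lt_of_lt_ofReal hcase
        have hsum_nonneg : 0 ≤ ∑ i ∈ Finset.Icc 1 j, p' i :=
          Finset.sum_nonneg fun i hi => (hp' i (Finset.Icc_subset_Icc_right (by omega) hi)).1
        have hPRto : (P R).toReal = 1 - ∑ i ∈ Finset.Icc 1 j, p' i := by
          rw [hPR, ENNReal.toReal_sub_of_le (ENNReal.ofReal_le_one.2 (by linarith)) (by simp),
            ENNReal.toReal_one, ENNReal.toReal_ofReal hsum_nonneg]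
        have hPRsplit : (P R).toReal = aR + (P G).toReal := by
          rw [hPRA, ENNReal.toReal_add (measure_ne_top P _) (measure_ne_top P _)]
        have hvleG : p' (j+1) - aR ≤ (P G).toReal := by linarith
        obtain ⟨C, hCdesc, hCP⟩ := StoppingAux.exists_cut P X hXmeas hatom G hGm
          (p' (j+1) - aR) (by linarith) hvleG
        have hCF : MeasurableSet[ℱ (t 1)] C := by
          rcases hCdesc with rfl | rfl | ⟨c, rfl⟩
          · exact @MeasurableSet.empty _ (ℱ (t 1))
          · exact @MeasurableSet.univ _ (ℱ (t 1))
          · have hXF : Measurable[ℱ (t 1)] X := (hWadapted (t 1) ht1pos.le).measurable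
            exact hXF measurableSet_Iic
        have hCm : MeasurableSet C := ℱ.le (t 1) _ hCF
        set Dnew := A ∪ (G ∩ C) with hDnew
        have hDnewSubR : Dnew ⊆ R :=
          Set.union_subset hASubR (Set.inter_subset_left.trans Set.diff_subset)
        have hDnewF : MeasurableSet[ℱ (t (j+1))] Dnew :=
          hAF.union (hGF.inter (ℱ.mono ht1le' _ hCF))
        have hADdisj : Disjoint A (G ∩ C) := by
          rw [Set.disjoint_left]
          rintro ω hωA ⟨⟨_, hωT⟩, _⟩
          exact hωT (hASubT hωA)
        have hPDnew : P Dnew = ENNReal.ofReal (p' (j+1)) := by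
          have h1 : P Dnew = P A + P (G ∩ C) := by
            rw [hDnew]; exact measure_union hADdisj (hGm.inter hCm)
          rw [h1, hCP, hPAofReal, ← ENNReal.ofReal_add haRnn (by linarith)]
          congr 1
          ring
        have hdiffD : Dnew \ T = G ∩ C := by
          ext ω
          simp only [hDnew, Set.mem_diff, Set.mem_union, Set.mem_inter_iff]
          constructor
          · rintro ⟨h | h, hT'⟩
            · exact absurd (hASubT h) hT'
            · exact h
          · rintro ⟨hωG, hωC⟩
            exact ⟨Or.inr ⟨hωG, hωC⟩, hωG.2⟩
        refine ⟨Function.update D (j+1) Dnew, ?_, ?_, ?_, ?_⟩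
        · intro i hi
          rcases eq_or_ne i (j+1) with rfl | hne
          · rw [Function.update_self]; exact hDnewF
          · rw [Function.update_of_ne hne]
            exact hD1 i (by simp at hi ⊢; omega)
        · intro a ha b hb hab
          rcases eq_or_ne a (j+1) with rfl | hnea
          · rw [Function.update_self, Function.update_of_ne (Ne.symm hab)]
            have hb' : b ∈ Finset.Icc 1 j := by simp at hb ⊢; omega
            exact (hDsubR b hb').symm.mono_left hDnewSubR
          · rw [Function.update_of_ne hnea]
            rcases eq_or_ne b (j+1) with rfl | hneb
            · rw [Function.update_self]
              have ha' : a ∈ Finset.Icc 1 j := by simp at ha ⊢; omega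
              exact ((hDsubR a ha').symm.mono_left hDnewSubR).symm
            · rw [Function.update_of_ne hneb]
              exact hD2 a (by simp at ha ⊢; omega) b (by simp at hb ⊢; omega) hab
        · intro i hi
          rcases eq_or_ne i (j+1) with rfl | hne
          · rw [Function.update_self]; exact hPDnew
          · rw [Function.update_of_ne hne]
            exact hD3 i (by simp at hi ⊢; omega)
        · intro i hi
          rcases eq_or_ne i (j+1) with rfl | hne
          · rw [Function.update_self, hdiffD, hCP, ENNReal.toReal_ofReal (by linarith)]
            have hix : ∀ i' ∈ Finset.Icc 1 (j+1-1),
                (Function.update D (j+1) Dnew) i' = D i' := by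
              intro i' hi'2
              refine Function.update_of_ne ?_ _ _
              simp at hi'2; omega
            rw [Finset.sum_congr rfl (fun i' hi'2 => by rw [hix i' hi'2])]
            simp only [Nat.add_sub_cancel]
            have habs : p' (j+1) - p (j+1) ≤ |p (j+1) - p' (j+1)| := by
              rw [abs_sub_comm]
              exact le_abs_self _
            linarith
          · rw [Function.update_of_ne hne]
            have hi' : i ∈ Finset.Icc 1 j := by simp at hi ⊢; omega
            have hix : ∀ i' ∈ Finset.Icc 1 (i-1),
                (Function.update D (j+1) Dnew) i' = D i' := by
              intro i' hi'2
              refine Function.update_of_ne ?_ _ _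
              simp at hi'2 hi'; omega
            rw [Finset.sum_congr rfl (fun i' hi'2 => by rw [hix i' hi'2])]
            exact hD4 i hi'

  obtain ⟨D, hD1, hD2, hD3, hD4⟩ := build n le_rfl
  have hDm : ∀ i ∈ Finset.Icc 1 n, MeasurableSet (D i) := fun i hi => ℱ.le (t i) _ (hD1 i hi)
  set Rest := (⋃ k ∈ Finset.Icc 1 n, D k)ᶜ with hRestdef
  have hUm : MeasurableSet (⋃ k ∈ Finset.Icc 1 n, D k) := Finset.measurableSet_biUnion _ hDm
  have hRestm : MeasurableSet Rest := hUm.compl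
  have hPU : P (⋃ k ∈ Finset.Icc 1 n, D k) = ENNReal.ofReal (∑ k ∈ Finset.Icc 1 n, p' k) := by
    rw [measure_biUnion_finset ?_ hDm]
    · rw [Finset.sum_congr rfl hD3, ← ENNReal.ofReal_sum_of_nonneg
        (fun i hi => (hp' i (Finset.Icc_subset_Icc_right (by omega) hi)).1)]
    · intro a ha b hb hab
      exact hD2 a (Finset.mem_coe.1 ha) b (Finset.mem_coe.1 hb) hab
  have hp'last : 0 ≤ p' (n+1) := (hp' (n+1) (by simp only [Finset.mem_Icc]; omega)).1
  have hp'last1 : p' (n+1) ≤ 1 := (hp' (n+1) (by simp only [Finset.mem_Icc]; omega)).2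
  have hsumIcc : ∑ k ∈ Finset.Icc 1 n, p' k = 1 - p' (n+1) := by
    have h := hp'sum
    rw [← Finset.insert_Icc_right_eq_Icc_add_one (by omega : 1 ≤ n + 1), Finset.sum_insert (by simp)] at h
    linarith
  have hPRest : P Rest = ENNReal.ofReal (p' (n+1)) := by
    rw [hRestdef, measure_compl hUm (measure_ne_top P _), measure_univ, hPU, hsumIcc]
    refine ENNReal.sub_eq_of_eq_add ENNReal.ofReal_ne_top ?_
    rw [← ENNReal.ofReal_add hp'last (by linarith : (0:ℝ) ≤ 1 - p' (n+1)),
      show p' (n+1) + (1 - p' (n+1)) = 1 by ring, ENNReal.ofReal_one]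
  -- definition of τ'
  set τ'f : Ω → ℝ := fun ω => t (n+1) + ∑ k ∈ Finset.Icc 1 n,
      Set.indicator (D k) (fun _ => t k - t (n+1)) ω with hτ'def
  have hval1 : ∀ k ∈ Finset.Icc 1 n, ∀ ω ∈ D k, τ'f ω = t k := by
    intro k hk ω hω
    have hsum : ∑ i ∈ Finset.Icc 1 n, Set.indicator (D i) (fun _ => t i - t (n+1)) ω
        = t k - t (n+1) := by
      rw [Finset.sum_eq_single k]
      · rw [Set.indicator_of_mem hω]
      · intro i hi hik
        have hωi : ω ∉ D i := fun hmem => (Set.disjoint_left.1 (hD2 i hi k hk hik)) hmem hω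
        rw [Set.indicator_of_notMem hωi]
      · intro h; exact absurd hk h
    simp only [hτ'def]
    rw [hsum]; ring
  have hval2 : ∀ ω, (∀ k ∈ Finset.Icc 1 n, ω ∉ D k) → τ'f ω = t (n+1) := by
    intro ω hω
    have hsum : ∑ i ∈ Finset.Icc 1 n, Set.indicator (D i) (fun _ => t i - t (n+1)) ω = 0 :=
      Finset.sum_eq_zero fun i hi => Set.indicator_of_notMem (hω i hi) _
    simp only [hτ'def]
    rw [hsum]; ring
  have hcases : ∀ ω, (∃ k ∈ Finset.Icc 1 n, ω ∈ D k ∧ τ'f ω = t k)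
      ∨ ((∀ k ∈ Finset.Icc 1 n, ω ∉ D k) ∧ τ'f ω = t (n+1)) := by
    intro ω
    by_cases h : ∃ k ∈ Finset.Icc 1 n, ω ∈ D k
    · obtain ⟨k, hk, hωk⟩ := h
      exact Or.inl ⟨k, hk, hωk, hval1 k hk ω hωk⟩
    · push_neg at h
      exact Or.inr ⟨h, hval2 ω h⟩
  have hmemRest : ∀ ω, (∀ k ∈ Finset.Icc 1 n, ω ∉ D k) → ω ∈ Rest := by
    intro ω h
    simp only [hRestdef, Set.mem_compl_iff]
    intro hU
    obtain ⟨k, hk, hωk⟩ := Set.mem_iUnion₂.1 hU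
    exact h k hk hωk
  have hnotRest : ∀ ω k, k ∈ Finset.Icc 1 n → ω ∈ D k → ω ∉ Rest := by
    intro ω k hk hωk hR
    exact hR (Set.mem_biUnion hk hωk)
  -- τ' is a stopping time
  have hst : IsStoppingTime ℱ (fun ω => (τ'f ω : WithTop ℝ)) := by
    intro s
    simp only [WithTop.coe_le_coe]
    by_cases hs : t (n+1) ≤ s
    · have huniv : {ω | τ'f ω ≤ s} = Set.univ := by
        ext ω
        simp only [Set.mem_setOf_eq, Set.mem_univ, iff_true]
        rcases hcases ω with ⟨k, hk, _, hval⟩ | ⟨_, hval⟩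
        · rw [hval]
          have hle : t k ≤ t (n+1) := (hstrict k (n+1) (by simp at hk; omega) le_rfl).le
          linarith
        · rw [hval]; exact hs
      rw [huniv]
      exact @MeasurableSet.univ _ (ℱ s)
    · push_neg at hs
      have heq : {ω | τ'f ω ≤ s}
          = ⋃ k ∈ (Finset.Icc 1 n).filter (fun k => t k ≤ s), D k := by
        ext ω
        simp only [Set.mem_setOf_eq, Set.mem_iUnion, Finset.mem_filter, exists_prop]
        constructor
        · intro hle
          rcases hcases ω with ⟨k, hk, hωk, hval⟩ | ⟨_, hval⟩
          · rw [hval] at hle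
            exact ⟨k, ⟨hk, hle⟩, hωk⟩
          · rw [hval] at hle; linarith
        · rintro ⟨k, ⟨hk, hks⟩, hωk⟩
          rw [hval1 k hk ω hωk]
          exact hks
      rw [heq]
      refine Finset.measurableSet_biUnion _ fun k hk => ?_
      obtain ⟨hk1, hk2⟩ := Finset.mem_filter.1 hk
      exact ℱ.mono hk2 _ (hD1 k hk1)
  -- τ' is measurable
  have hτ'meas : Measurable τ'f := by
    apply Measurable.add measurable_const
    apply Finset.measurable_sum
    intro i hi
    exact measurable_const.indicator (hDm i hi)
  -- law of τ'
  have hτ'law : Measure.map τ'f P = atomicLaw (n+1) t p' := by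
    refine Measure.ext fun s hs => ?_
    rw [Measure.map_apply hτ'meas hs]
    have hpre : τ'f ⁻¹' s = (⋃ k ∈ (Finset.Icc 1 n).filter (fun k => t k ∈ s), D k)
        ∪ (if t (n+1) ∈ s then Rest else ∅) := by
      ext ω
      rcases hcases ω with ⟨k, hk, hωk, hval⟩ | ⟨hnot, hval⟩
      · simp only [Set.mem_preimage, hval, Set.mem_union, Set.mem_iUnion, Finset.mem_filter,
          exists_prop]
        constructor
        · intro hts
          exact Or.inl ⟨k, ⟨hk, hts⟩, hωk⟩
        · rintro (⟨k', ⟨hk', hts⟩, hωk'⟩ | hrest)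
          · have hkk : k' = k := by
              by_contra hne
              exact (Set.disjoint_left.1 (hD2 k' hk' k hk hne)) hωk' hωk
            rwa [hkk] at hts
          · exfalso
            by_cases h : t (n+1) ∈ s
            · rw [if_pos h] at hrest
              exact hnotRest ω k hk hωk hrest
            · rw [if_neg h] at hrest
              exact hrest
      · simp only [Set.mem_preimage, hval, Set.mem_union, Set.mem_iUnion, Finset.mem_filter,
          exists_prop]
        constructor
        · intro hts
          exact Or.inr (by rw [if_pos hts]; exact hmemRest ω hnot)
        · rintro (⟨k', ⟨hk', _⟩, hωk'⟩ | hrest)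
          · exact absurd hωk' (hnot k' hk')
          · by_cases h : t (n+1) ∈ s
            · exact h
            · rw [if_neg h] at hrest
              exact absurd hrest (Set.notMem_empty ω)
    rw [hpre]
    have hdisj2 : Disjoint (⋃ k ∈ (Finset.Icc 1 n).filter (fun k => t k ∈ s), D k)
        (if t (n+1) ∈ s then Rest else ∅) := by
      split_ifs
      · rw [Set.disjoint_left]
        intro ω hω
        obtain ⟨k, hk, hωk⟩ := Set.mem_iUnion₂.1 hω
        exact hnotRest ω k (Finset.mem_of_mem_filter k hk) hωk
      · exact Set.disjoint_empty _
    rw [measure_union hdisj2 (by split_ifs; exacts [hRestm, MeasurableSet.empty])]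
    have hPUs : P (⋃ k ∈ (Finset.Icc 1 n).filter (fun k => t k ∈ s), D k)
        = ∑ k ∈ (Finset.Icc 1 n).filter (fun k => t k ∈ s), ENNReal.ofReal (p' k) := by
      rw [measure_biUnion_finset ?_ (fun k hk => hDm k (Finset.mem_of_mem_filter k hk))]
      · exact Finset.sum_congr rfl fun k hk => hD3 k (Finset.mem_of_mem_filter k hk)
      · intro a ha b hb hab
        exact hD2 a (Finset.mem_of_mem_filter a (Finset.mem_coe.1 ha))
          b (Finset.mem_of_mem_filter b (Finset.mem_coe.1 hb)) hab
    rw [hPUs]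
    rw [atomicLaw, Measure.finset_sum_apply]
    have hterm : ∀ k ∈ Finset.Icc 1 (n+1),
        (ENNReal.ofReal (p' k) • Measure.dirac (t k)) s
          = if t k ∈ s then ENNReal.ofReal (p' k) else 0 := by
      intro k _
      rw [Measure.smul_apply, Measure.dirac_apply' _ hs, smul_eq_mul]
      by_cases h : t k ∈ s
      · rw [if_pos h, Set.indicator_of_mem h, Pi.one_apply, mul_one]
      · rw [if_neg h, Set.indicator_of_notMem h, mul_zero]
    rw [Finset.sum_congr rfl hterm]
    rw [← Finset.insert_Icc_right_eq_Icc_add_one (by omega : 1 ≤ n + 1), Finset.sum_insert (by simp),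
      ← Finset.sum_filter]
    by_cases h : t (n+1) ∈ s
    · rw [if_pos h, if_pos h, hPRest, add_comm]
    · rw [if_neg h, if_neg h, measure_empty, add_zero, zero_add]
  -- the probability bound
  have hbound : P {ω | τ ω ≠ τ'f ω}
      ≤ ENNReal.ofReal (4 ^ (n+1) * ∑ k ∈ Finset.Icc 1 (n+1), |p k - p' k|) := by
    set δ := ∑ k ∈ Finset.Icc 1 (n+1), |p k - p' k| with hδdef
    have hδ0 : 0 ≤ δ := Finset.sum_nonneg fun _ _ => abs_nonneg _
    have hBsub : {ω | τ ω ≠ τ'f ω} ⊆ (⋃ k ∈ Finset.Icc 1 n, (D k \ {ω | τ ω = t k}))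
        ∪ (Rest \ {ω | τ ω = t (n+1)}) := by
      intro ω hω
      rcases hcases ω with ⟨k, hk, hωk, hval⟩ | ⟨hnot, hval⟩
      · left
        refine Set.mem_biUnion hk ⟨hωk, ?_⟩
        intro hτk
        exact hω (hτk.trans hval.symm)
      · right
        refine ⟨hmemRest ω hnot, ?_⟩
        intro hτk
        exact hω (hτk.trans hval.symm)
    have hRdsub : Rest \ {ω | τ ω = t (n+1)}
        ⊆ (τ ⁻¹' (↑((Finset.Icc 1 (n+1)).image t) : Set ℝ)ᶜ)
          ∪ ⋃ k ∈ Finset.Icc 1 n, ({ω | τ ω = t k} \ D k) := by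
      rintro ω ⟨hωR, hωT⟩
      by_cases hτω : τ ω ∈ (↑((Finset.Icc 1 (n+1)).image t) : Set ℝ)
      · right
        simp only [Finset.coe_image, Set.mem_image, Finset.mem_coe] at hτω
        obtain ⟨k, hk, htk⟩ := hτω
        have hkn : k ∈ Finset.Icc 1 n := by
          have hne : k ≠ n + 1 := by
            intro hkeq
            apply hωT
            rw [Set.mem_setOf_eq, ← htk, hkeq]
          simp only [Finset.mem_Icc] at hk ⊢
          omega
        refine Set.mem_biUnion hkn ⟨htk.symm, ?_⟩
        intro hωD
        exact hnotRest ω k hkn hωD hωR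
      · left
        exact hτω
    have hP1 : P {ω | τ ω ≠ τ'f ω} ≤ ∑ k ∈ Finset.Icc 1 n, P (D k \ {ω | τ ω = t k})
        + P (Rest \ {ω | τ ω = t (n+1)}) := by
      refine (measure_mono hBsub).trans ?_
      refine (measure_union_le _ _).trans ?_
      exact add_le_add_left (measure_biUnion_finset_le _ _) _
    have hP2 : P (Rest \ {ω | τ ω = t (n+1)})
        ≤ ∑ k ∈ Finset.Icc 1 n, P ({ω | τ ω = t k} \ D k) := by
      refine (measure_mono hRdsub).trans ?_
      refine (measure_union_le _ _).trans ?_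
      rw [hAtomsAE, zero_add]
      exact measure_biUnion_finset_le _ _
    have hPTD : ∀ k ∈ Finset.Icc 1 n, (P ({ω | τ ω = t k} \ D k)).toReal
        ≤ |p k - p' k| + (P (D k \ {ω | τ ω = t k})).toReal := by
      intro k hk
      have hkIcc : k ∈ Finset.Icc 1 (n+1) := Finset.Icc_subset_Icc_right (by omega) hk
      have e1 : P {ω | τ ω = t k} = P ({ω | τ ω = t k} ∩ D k) + P ({ω | τ ω = t k} \ D k) :=
        (measure_inter_add_diff _ (hDm k hk)).symm
      have e2 : P (D k) = P (D k ∩ {ω | τ ω = t k}) + P (D k \ {ω | τ ω = t k}) :=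
        (measure_inter_add_diff _ (hTmeas k)).symm
      have e3 := hTval k hkIcc
      have e4 := hD3 k hk
      have hpk : 0 ≤ p k := (hp k hkIcc).1
      have hp'k : 0 ≤ p' k := (hp' k hkIcc).1
      have c1 : p k = (P ({ω | τ ω = t k} ∩ D k)).toReal
          + (P ({ω | τ ω = t k} \ D k)).toReal := by
        rw [← ENNReal.toReal_add (measure_ne_top P _) (measure_ne_top P _), ← e1, e3,
          ENNReal.toReal_ofReal hpk]
      have c2 : p' k = (P (D k ∩ {ω | τ ω = t k})).toReal
          + (P (D k \ {ω | τ ω = t k})).toReal := by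
        rw [← ENNReal.toReal_add (measure_ne_top P _) (measure_ne_top P _), ← e2, e4,
          ENNReal.toReal_ofReal hp'k]
      rw [Set.inter_comm] at c1
      have habs := le_abs_self (p k - p' k)
      linarith
    have hδsingle : ∀ k ∈ Finset.Icc 1 (n+1), |p k - p' k| ≤ δ := by
      intro k hk
      exact Finset.single_le_sum (fun i _ => abs_nonneg (p i - p' i)) hk
    have hεsum : ∀ k, k ≤ n → ∑ i ∈ Finset.Icc 1 k, (P (D i \ {ω | τ ω = t i})).toReal
        ≤ (2 ^ k - 1) * δ := by
      intro k
      induction k with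
      | zero => intro _; simp
      | succ j ihb =>
        intro hjn
        rw [← Finset.insert_Icc_right_eq_Icc_add_one (by omega : 1 ≤ j + 1), Finset.sum_insert (by simp)]
        have h1 := ihb (by omega)
        have h2 : (P (D (j+1) \ {ω | τ ω = t (j+1)})).toReal
            ≤ |p (j+1) - p' (j+1)| + ∑ i ∈ Finset.Icc 1 j, (P (D i \ {ω | τ ω = t i})).toReal := by
          have h := hD4 (j+1) (by simp only [Finset.mem_Icc]; omega)
          simpa using h
        have h3 : |p (j+1) - p' (j+1)| ≤ δ := hδsingle (j+1) (by simp only [Finset.mem_Icc]; omega)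
        rw [pow_succ]
        linarith
    have hfin1 : (∑ k ∈ Finset.Icc 1 n, P (D k \ {ω | τ ω = t k})) ≠ ⊤ :=
      (ENNReal.sum_lt_top.2 fun k _ => measure_lt_top P _).ne
    have hfin2 : (∑ k ∈ Finset.Icc 1 n, P ({ω | τ ω = t k} \ D k)) ≠ ⊤ :=
      (ENNReal.sum_lt_top.2 fun k _ => measure_lt_top P _).ne
    have hPBr : (P {ω | τ ω ≠ τ'f ω}).toReal
        ≤ ∑ k ∈ Finset.Icc 1 n, (P (D k \ {ω | τ ω = t k})).toReal
          + ∑ k ∈ Finset.Icc 1 n, (|p k - p' k| + (P (D k \ {ω | τ ω = t k})).toReal) := by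
      have hle : P {ω | τ ω ≠ τ'f ω} ≤ ∑ k ∈ Finset.Icc 1 n, P (D k \ {ω | τ ω = t k})
          + ∑ k ∈ Finset.Icc 1 n, P ({ω | τ ω = t k} \ D k) :=
        hP1.trans (add_le_add_right hP2 _)
      have h1 := ENNReal.toReal_mono (ENNReal.add_ne_top.2 ⟨hfin1, hfin2⟩) hle
      rw [ENNReal.toReal_add hfin1 hfin2, ENNReal.toReal_sum (fun k _ => measure_ne_top P _),
        ENNReal.toReal_sum (fun k _ => measure_ne_top P _)] at h1
      refine h1.trans (add_le_add le_rfl ?_)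
      exact Finset.sum_le_sum hPTD
    have hsum2 : ∑ k ∈ Finset.Icc 1 n, |p k - p' k| ≤ δ :=
      Finset.sum_le_sum_of_subset_of_nonneg (Finset.Icc_subset_Icc_right (by omega))
        (fun i _ _ => abs_nonneg _)
    have hεsumn := hεsum n le_rfl
    have hpow3 : (2:ℝ) ^ (n+1) ≤ 4 ^ (n+1) :=
      pow_le_pow_left₀ (by norm_num) (by norm_num) (n+1)
    have htotal : (P {ω | τ ω ≠ τ'f ω}).toReal ≤ 4 ^ (n+1) * δ := by
      have hsplit2 : ∑ k ∈ Finset.Icc 1 n, (|p k - p' k| + (P (D k \ {ω | τ ω = t k})).toReal)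
          = ∑ k ∈ Finset.Icc 1 n, |p k - p' k|
            + ∑ k ∈ Finset.Icc 1 n, (P (D k \ {ω | τ ω = t k})).toReal :=
        Finset.sum_add_distrib
      calc (P {ω | τ ω ≠ τ'f ω}).toReal
          ≤ ∑ k ∈ Finset.Icc 1 n, (P (D k \ {ω | τ ω = t k})).toReal
            + ∑ k ∈ Finset.Icc 1 n, (|p k - p' k| + (P (D k \ {ω | τ ω = t k})).toReal) := hPBr
        _ = ∑ k ∈ Finset.Icc 1 n, |p k - p' k|
            + 2 * ∑ k ∈ Finset.Icc 1 n, (P (D k \ {ω | τ ω = t k})).toReal := by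
            rw [hsplit2]; ring
        _ ≤ δ + 2 * ((2 ^ n - 1) * δ) := by
            have h2' : 2 * ∑ k ∈ Finset.Icc 1 n, (P (D k \ {ω | τ ω = t k})).toReal
                ≤ 2 * ((2 ^ n - 1) * δ) := by linarith
            linarith
        _ = ((2:ℝ) ^ (n+1) - 1) * δ := by rw [pow_succ]; ring
        _ ≤ 4 ^ (n+1) * δ := by
            refine mul_le_mul_of_nonneg_right ?_ hδ0
            linarith
    calc P {ω | τ ω ≠ τ'f ω} = ENNReal.ofReal ((P {ω | τ ω ≠ τ'f ω}).toReal) :=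
          (ENNReal.ofReal_toReal (measure_ne_top P _)).symm
      _ ≤ ENNReal.ofReal (4 ^ (n+1) * δ) := ENNReal.ofReal_le_ofReal htotal
  exact ⟨τ'f, hst, hτ'law, hbound⟩



end Aux

/-- given two probability vectors `p, p'`, any stopping time with law
`∑ p_k δ_{t_k}` can be approximated by a stopping time with law `∑ p'_k δ_{t_k}` such that
`P[τ ≠ τ'] ≤ 4^r ‖p - p'‖_{ℓ¹}`. -/
theorem stopping_time_approximation
    {Ω : Type*} {m : MeasurableSpace Ω} (P : Measure Ω) [IsProbabilityMeasure P]
    (W : ℝ → Ω → ℝ) (ℱ : Filtration ℝ m)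
    -- `W` is a standard Brownian motion:
    (hWmeas : ∀ s : ℝ, Measurable (W s))
    (hW0 : ∀ᵐ ω ∂P, W 0 ω = 0)
    (hWcont : ∀ᵐ ω ∂P, Continuous fun s => W s ω)
    (hWindep : ∀ s u : ℝ, 0 ≤ s → s ≤ u →
      Indep (MeasurableSpace.comap (fun ω => W u ω - W s ω) (borel ℝ))
        (⨆ v ∈ Set.Icc (0:ℝ) s, MeasurableSpace.comap (W v) (borel ℝ)) P)
    (hWlaw : ∀ s u : ℝ, 0 ≤ s → s ≤ u →
      Measure.map (fun ω => W u ω - W s ω) P = gaussianReal 0 (Real.toNNReal (u - s)))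
    -- `ℱ` is the natural filtration of `W` augmented by the `P`-null sets:
    (hWadapted : ∀ s : ℝ, 0 ≤ s → StronglyMeasurable[ℱ s] (W s))
    (hℱindep : ∀ s u : ℝ, 0 ≤ s → s ≤ u →
      Indep (MeasurableSpace.comap (fun ω => W u ω - W s ω) (borel ℝ)) (ℱ s) P)
    (hNull : ∀ s : ℝ, ∀ N : Set Ω, MeasurableSet N → P N = 0 → MeasurableSet[ℱ s] N)
    -- times and weights:
    (r : ℕ) (hr : 1 ≤ r) (t : ℕ → ℝ) (ht0 : t 0 = 0)
    (htmono : ∀ k, k < r → t k < t (k + 1))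
    (p p' : ℕ → ℝ)
    (hp : ∀ k ∈ Finset.Icc 1 r, p k ∈ Set.Icc (0:ℝ) 1)
    (hp' : ∀ k ∈ Finset.Icc 1 r, p' k ∈ Set.Icc (0:ℝ) 1)
    (hpsum : ∑ k ∈ Finset.Icc 1 r, p k = 1)
    (hp'sum : ∑ k ∈ Finset.Icc 1 r, p' k = 1)
    (τ : Ω → ℝ) (hτ : IsStoppingTime ℱ (fun ω => (τ ω : WithTop ℝ)))
    (hτlaw : Measure.map τ P = atomicLaw r t p) :
    ∃ τ' : Ω → ℝ, IsStoppingTime ℱ (fun ω => (τ' ω : WithTop ℝ)) ∧ Measure.map τ' P = atomicLaw r t p' ∧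
      P {ω | τ ω ≠ τ' ω} ≤
        ENNReal.ofReal (4 ^ r * ∑ k ∈ Finset.Icc 1 r, |p k - p' k|) := by
  exact StoppingAux.main P W ℱ hWmeas hW0 hWlaw hWadapted r hr t ht0 htmono
    p p' hp hp' hpsum hp'sum τ hτ hτlaw

end
end

section
/- Fix k ∈ {1, …, r−1}. For all y, y' ∈ Δ_k with y_k < 1 and y'_k < 1, one has ‖P_k(y) − P_k(y')‖_{ℓ∞} ≤ (1/(1 − y_k) + 1/(1 − y'_k)) · ‖y − y'‖_{ℓ∞}. -/
open Set

noncomputable section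

/-- The sets `Δ_k ⊂ ℝ^r` (vectors indexed by `{1, …, r}`, extended by zero elsewhere). -/
def simplexSet (r k : ℕ) : Set (ℕ → ℝ) :=
  {y | (∀ l, y l ∈ Set.Icc (0:ℝ) 1) ∧ (∑ l ∈ Finset.Icc 1 r, y l = 1) ∧
    (∀ l, l < k → y l = 0) ∧ (∀ l, r < l → y l = 0)}

/-- The `k`-th standard basis vector `e_k` of `ℝ^r`. -/
def eVec (k : ℕ) : ℕ → ℝ := fun l => if l = k then 1 else 0

/-- The perspective map `P_k : Δ_k → Δ_k`. -/
def perspMap (r k : ℕ) (y : ℕ → ℝ) : ℕ → ℝ :=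
  if y k = 1 then y
  else fun l => if k < l then (∑ j ∈ Finset.Icc (k + 1) r, y j)⁻¹ * y l else 0

lemma key_est (a b s t M : ℝ) (hs : 0 < s) (ht : 0 < t)
    (ha0 : 0 ≤ a) (has : a ≤ s) (hb0 : 0 ≤ b) (hbt : b ≤ t)
    (hab : |a - b| ≤ M) (hst : |s - t| ≤ M) :
    |s⁻¹ * a - t⁻¹ * b| ≤ (s⁻¹ + t⁻¹) * M := by
  have hM0 : 0 ≤ M := le_trans (abs_nonneg _) hab
  rw [abs_le] at hab hst
  have key : |t * a - s * b| ≤ (s + t) * M := by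
    rcases le_total s t with h | h <;> rw [abs_le] <;> constructor <;>
      nlinarith [mul_nonneg ha0 hM0, mul_nonneg hb0 hM0, mul_nonneg hs.le hM0,
        mul_nonneg ht.le hM0, mul_nonneg (sub_nonneg.2 has) hM0,
        mul_nonneg (sub_nonneg.2 hbt) hM0,
        mul_le_mul_of_nonneg_left hab.2 hs.le, mul_le_mul_of_nonneg_left hab.2 ht.le,
        mul_le_mul_of_nonneg_left hab.1 hs.le, mul_le_mul_of_nonneg_left hab.1 ht.le,
        mul_le_mul_of_nonneg_right hst.2 ha0, mul_le_mul_of_nonneg_right hst.1 ha0,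
        mul_le_mul_of_nonneg_right hst.2 hb0, mul_le_mul_of_nonneg_right hst.1 hb0]
  have heq : s⁻¹ * a - t⁻¹ * b = (t * a - s * b) / (s * t) := by
    field_simp
  have e : (s⁻¹ + t⁻¹) * M * (s * t) = (s + t) * M := by
    have h1 : s⁻¹ * s = 1 := inv_mul_cancel₀ hs.ne'
    have h2 : t⁻¹ * t = 1 := inv_mul_cancel₀ ht.ne'
    calc (s⁻¹ + t⁻¹) * M * (s * t) = (s⁻¹ * s) * (t * M) + (t⁻¹ * t) * (s * M) := by ring
      _ = (s + t) * M := by rw [h1, h2]; ring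
  rw [heq, abs_div, abs_of_pos (mul_pos hs ht), div_le_iff₀ (mul_pos hs ht), e]
  exact key

lemma tail_sum (r k : ℕ) (hk1 : 1 ≤ k) (hkr : k ≤ r) (y : ℕ → ℝ)
    (hy : y ∈ simplexSet r k) : ∑ j ∈ Finset.Icc (k + 1) r, y j = 1 - y k := by
  obtain ⟨h01, hsum, hlt, hgt⟩ := hy
  have hsplit : ∑ l ∈ Finset.Ioc 0 k, y l + ∑ l ∈ Finset.Ioc k r, y l
      = ∑ l ∈ Finset.Ioc 0 r, y l :=
    Finset.sum_Ioc_consecutive _ (Nat.zero_le k) hkr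
  have h1 : Finset.Icc 1 r = Finset.Ioc 0 r := by rw [← Finset.Icc_add_one_left_eq_Ioc]; rfl
  have h2 : Finset.Icc (k + 1) r = Finset.Ioc k r := by rw [← Finset.Icc_add_one_left_eq_Ioc]
  have hhead : ∑ l ∈ Finset.Ioc 0 k, y l = y k := by
    apply Finset.sum_eq_single_of_mem
    · exact Finset.mem_Ioc.mpr ⟨hk1, le_rfl⟩
    · intro l hl hne
      exact hlt l (lt_of_le_of_ne (Finset.mem_Ioc.mp hl).2 hne)
  rw [h2]
  rw [h1, ← hsplit, hhead] at hsum
  linarith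

/-- the `ℓ∞` estimate
`‖P_k(y) - P_k(y')‖_∞ ≤ (1/(1-y_k) + 1/(1-y'_k)) ‖y - y'‖_∞` for `y, y' ∈ Δ_k` with
`y_k < 1`, `y'_k < 1`. -/
theorem perspMap_linfty_estimate (r : ℕ) (hr : 1 ≤ r) (k : ℕ) (hk1 : 1 ≤ k) (hkr : k < r)
    (y y' : ℕ → ℝ) (hy : y ∈ simplexSet r k) (hy' : y' ∈ simplexSet r k)
    (hyk : y k < 1) (hy'k : y' k < 1) :
    ∀ l : ℕ, |perspMap r k y l - perspMap r k y' l| ≤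
      (1 / (1 - y k) + 1 / (1 - y' k)) *
        (Finset.Icc 1 r).sup' (Finset.nonempty_Icc.mpr hr) (fun j => |y j - y' j|) := by
  obtain ⟨h01, hsum, hlt, hgt⟩ := hy
  obtain ⟨h01', hsum', hlt', hgt'⟩ := hy'
  set M := (Finset.Icc 1 r).sup' (Finset.nonempty_Icc.mpr hr) (fun j => |y j - y' j|) with hMdef
  have hkmem : k ∈ Finset.Icc 1 r := Finset.mem_Icc.mpr ⟨hk1, hkr.le⟩
  have hM : ∀ j ∈ Finset.Icc 1 r, |y j - y' j| ≤ M := fun j hj => Finset.le_sup' (fun j => |y j - y' j|) hj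
  have hM0 : 0 ≤ M := le_trans (abs_nonneg _) (hM k hkmem)
  have hs : 0 < 1 - y k := by linarith
  have ht : 0 < 1 - y' k := by linarith
  have hts : ∑ j ∈ Finset.Icc (k + 1) r, y j = 1 - y k :=
    tail_sum r k hk1 hkr.le y ⟨h01, hsum, hlt, hgt⟩
  have hts' : ∑ j ∈ Finset.Icc (k + 1) r, y' j = 1 - y' k :=
    tail_sum r k hk1 hkr.le y' ⟨h01', hsum', hlt', hgt'⟩
  have hrhs0 : 0 ≤ (1 / (1 - y k) + 1 / (1 - y' k)) * M := by positivity
  intro l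
  rw [perspMap, perspMap, if_neg hyk.ne, if_neg hy'k.ne]
  by_cases hkl : k < l
  · rw [if_pos hkl, if_pos hkl, hts, hts']
    by_cases hlr : l ≤ r
    · have hlmem : l ∈ Finset.Icc 1 r := Finset.mem_Icc.mpr ⟨le_trans hk1 hkl.le, hlr⟩
      have hylS : y l ≤ 1 - y k := by
        rw [← hts]
        exact Finset.single_le_sum (fun j hj => (h01 j).1)
          (Finset.mem_Icc.mpr ⟨hkl, hlr⟩)
      have hy'lT : y' l ≤ 1 - y' k := by
        rw [← hts']
        exact Finset.single_le_sum (fun j hj => (h01' j).1)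
          (Finset.mem_Icc.mpr ⟨hkl, hlr⟩)
      have hstM : |(1 - y k) - (1 - y' k)| ≤ M := by
        have : (1 - y k) - (1 - y' k) = -(y k - y' k) := by ring
        rw [this, abs_neg]
        exact hM k hkmem
      rw [one_div, one_div]
      exact key_est (y l) (y' l) (1 - y k) (1 - y' k) M hs ht (h01 l).1 hylS
        (h01' l).1 hy'lT (hM l hlmem) hstM
    · push_neg at hlr
      rw [hgt l hlr, hgt' l hlr]
      simpa using hrhs0
  · rw [if_neg hkl, if_neg hkl]
    simpa using hrhs0

end
end
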